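/- Let S be a hyperbolic circle in ℍ, and suppose that for each x ∈ S we are given a constant curvature curve γ_x of ℍ with γ_x ∩ S = {x}. Then there exist distinct points x, y ∈ S with γ_x ∩ γ_y ≠ ∅; that is, the curves γ_x cannot be pairwise disjoint. -/

import Mathlib

set_option maxHeartbeats 1000000

open Real Set Complex

lemma circle_tangent_collinear (c c₁ : ℂ) (ρ r₁ : ℝ) (hρ : 0 < ρ) (θ₀ : ℝ)
    (hCx : Metric.sphere c₁ r₁ ∩ Metric.sphere c ρ = {c + ρ * Complex.exp (θ₀ * Complex.I)}) :
    ∃ lam : ℝ, lam ≠ 0 ∧ c₁ = c + lam * Complex.exp (θ₀ * Complex.I) ∧ |ρ - lam| = r₁ := by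
  have hu : ‖Complex.exp (θ₀ * Complex.I)‖ = 1 :=
    Complex.norm_exp_ofReal_mul_I θ₀
  set u : ℂ := Complex.exp (θ₀ * Complex.I) with hu_def
  set x : ℂ := c + ρ * u with hx_def
  have hx : x ∈ Metric.sphere c₁ r₁ ∩ Metric.sphere c ρ := by
    rw [hCx]; exact rfl
  have hxc : ‖x - c‖ = ρ := by
    have h : x - c = (ρ : ℂ) * u := by rw [hx_def]; ring
    rw [h, norm_mul, hu, Complex.norm_real, Real.norm_eq_abs, mul_one, abs_of_pos hρ]
  have hxc₁ : ‖x - c₁‖ = r₁ := by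
    have := hx.1
    rwa [Metric.mem_sphere, Complex.dist_eq] at this
  have hne : c₁ ≠ c := by
    intro h
    have hr₁ρ : r₁ = ρ := by rw [h] at hxc₁; rw [← hxc₁, hxc]
    have h1 : (c + ρ : ℂ) ∈ ({x} : Set ℂ) := by
      rw [← hCx]
      constructor <;>
        simp [Metric.mem_sphere, Complex.dist_eq, h, hr₁ρ, abs_of_pos hρ]
    have h2 : (c - ρ : ℂ) ∈ ({x} : Set ℂ) := by
      rw [← hCx]
      constructor <;>
        simp [Metric.mem_sphere, Complex.dist_eq, h, hr₁ρ, abs_of_pos hρ]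
    have h3 := (mem_singleton_iff.1 h1).trans (mem_singleton_iff.1 h2).symm
    have h4 : (ρ : ℂ) = 0 := by linear_combination h3 / 2
    have h5 : ρ = 0 := by exact_mod_cast congrArg Complex.re h4
    exact hρ.ne' h5
  set w : ℂ := c₁ - c with hw_def
  have hw : w ≠ 0 := sub_ne_zero.2 hne
  have habsw : ‖w‖ ≠ 0 := by simpa using hw
  have hwconj : (starRingEnd ℂ) w ≠ 0 := by simpa using hw
  set y : ℂ := c + w * (starRingEnd ℂ) (x - c) / (starRingEnd ℂ) w with hy_def
  have hA1 : (y - c) * (starRingEnd ℂ) w = w * (starRingEnd ℂ) (x - c) := by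
    rw [hy_def]
    field_simp
    ring
  have hA2 : (y - c₁) * (starRingEnd ℂ) w = w * (starRingEnd ℂ) (x - c₁) := by
    have e1 : (y - c₁) * (starRingEnd ℂ) w
        = (y - c) * (starRingEnd ℂ) w - w * (starRingEnd ℂ) w := by
      rw [hw_def]; ring
    rw [e1, hA1]
    have e2 : (starRingEnd ℂ) (x - c₁) = (starRingEnd ℂ) (x - c) - (starRingEnd ℂ) w := by
      simp only [hw_def, map_sub]; ring
    rw [e2]; ring
  have habs_conj : ∀ z : ℂ, ‖(starRingEnd ℂ) z‖ = ‖z‖ := fun z =>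
    Complex.norm_conj z
  have hyc : ‖y - c‖ = ρ := by
    have := congrArg norm hA1
    rw [norm_mul, norm_mul, habs_conj, habs_conj, hxc] at this
    exact mul_right_cancel₀ habsw (by linear_combination this)
  have hyc₁ : ‖y - c₁‖ = r₁ := by
    have := congrArg norm hA2
    rw [norm_mul, norm_mul, habs_conj, habs_conj, hxc₁] at this
    exact mul_right_cancel₀ habsw (by linear_combination this)
  have hyx : y = x := by
    have : y ∈ ({x} : Set ℂ) := by
      rw [← hCx]
      exact ⟨by rwa [Metric.mem_sphere, Complex.dist_eq],
             by rwa [Metric.mem_sphere, Complex.dist_eq]⟩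
    exact mem_singleton_iff.1 this
  -- key reflection identity
  have hkey : u * (starRingEnd ℂ) w = w * (starRingEnd ℂ) u := by
    rw [hyx] at hA1
    have h1 : (x - c) * (starRingEnd ℂ) w = w * (starRingEnd ℂ) (x - c) := hA1
    have h2 : x - c = (ρ:ℂ) * u := by rw [hx_def]; ring
    rw [h2, map_mul, Complex.conj_ofReal] at h1
    have hρc : (ρ:ℂ) ≠ 0 := by exact_mod_cast hρ.ne'
    exact mul_left_cancel₀ hρc (show (ρ:ℂ)*(u*(starRingEnd ℂ) w) = (ρ:ℂ)*(w*(starRingEnd ℂ) u) by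
      linear_combination h1)
  set m : ℂ := w * (starRingEnd ℂ) u with hm_def
  have hconjm : (starRingEnd ℂ) m = m := by
    rw [hm_def, map_mul, Complex.conj_conj]
    calc (starRingEnd ℂ) w * u = u * (starRingEnd ℂ) w := by ring
      _ = w * (starRingEnd ℂ) u := hkey
  have hm_im : m.im = 0 := by
    have h := congrArg Complex.im hconjm
    rw [Complex.conj_im] at h
    linarith
  have hm_re : m = (m.re : ℂ) := by
    apply Complex.ext
    · simp
    · simp [hm_im]
  have huu : u * (starRingEnd ℂ) u = 1 := by
    rw [Complex.mul_conj]
    norm_cast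
    rw [← Complex.sq_norm, hu]
    norm_num
  have hww : w = (m.re : ℂ) * u := by
    calc w = w * (u * (starRingEnd ℂ) u) := by rw [huu]; ring
      _ = m * u := by rw [hm_def]; ring
      _ = (m.re : ℂ) * u := by rw [← hm_re]
  refine ⟨m.re, ?_, ?_, ?_⟩
  · intro h
    apply hw
    rw [hww, h]
    simp
  · rw [hw_def] at hww
    linear_combination hww
  · have hxx : x - c₁ = ((ρ : ℝ) - m.re : ℝ) * u := by
      have hc₁ : c₁ = c + (m.re : ℂ) * u := by rw [hw_def] at hww; linear_combination hww
      rw [hc₁, hx_def]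
      push_cast
      ring
    have h := congrArg norm hxx
    rw [hxc₁, norm_mul, hu, mul_one, Complex.norm_real, Real.norm_eq_abs] at h
    exact h.symm

lemma interval_of_eventually {P : ℝ → Prop} (h : ∀ᶠ φ in nhds (0:ℝ), P φ) :
    ∃ w : ℝ, 0 < w ∧ w ≤ 1 ∧ ∀ φ : ℝ, |φ| ≤ w → P φ := by
  rw [Metric.eventually_nhds_iff] at h
  obtain ⟨ε, hε, hball⟩ := h
  refine ⟨min (ε/2) 1, by positivity, min_le_right _ _, fun φ hφ => ?_⟩
  apply hball
  rw [Real.dist_eq, sub_zero]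
  exact lt_of_le_of_lt (hφ.trans (min_le_left _ _)) (by linarith)

lemma cos_lt_one' {φ : ℝ} (h0 : φ ≠ 0) (h1 : |φ| ≤ 1) : Real.cos φ < 1 := by
  refine lt_of_le_of_ne (Real.cos_le_one φ) (fun h => h0 ?_)
  have := (Real.cos_eq_one_iff_of_lt_of_lt (x := φ)
    (by nlinarith [Real.pi_gt_three, abs_le.1 h1]) (by nlinarith [Real.pi_gt_three, abs_le.1 h1])).1 h
  exact this

lemma cos_pos' {φ : ℝ} (h1 : |φ| ≤ 1) : 0 < Real.cos φ := by
  apply Real.cos_pos_of_mem_Ioo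
  constructor <;> nlinarith [Real.pi_gt_three, abs_le.1 h1]

lemma local_graph_circle (c c₁ : ℂ) (ρ r₁ m : ℝ) (hρ : 0 < ρ) (hr : 0 < r₁)
    (hm : 0 < m) (θ₀ : ℝ)
    (hCx : Metric.sphere c₁ r₁ ∩ Metric.sphere c ρ = {c + ρ * Complex.exp (θ₀ * Complex.I)})
    (hcol : ∃ lam : ℝ, lam ≠ 0 ∧ c₁ = c + lam * Complex.exp (θ₀ * Complex.I) ∧ |ρ - lam| = r₁) :
    ∃ (w σ : ℝ) (A : ℝ → ℝ), 0 < w ∧ w ≤ 1 ∧ (σ = 1 ∨ σ = -1) ∧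
      ContinuousOn A (Set.Icc (-1 : ℝ) 1) ∧ A 0 = ρ ∧
      (∀ φ : ℝ, |φ| ≤ w → c + (A φ : ℂ) * Complex.exp ((θ₀ + φ) * Complex.I) ∈ Metric.sphere c₁ r₁) ∧
      (∀ φ : ℝ, |φ| ≤ w → |A φ - ρ| < m) ∧
      (∀ φ : ℝ, φ ≠ 0 → |φ| ≤ w → 0 < σ * (A φ - ρ)) := by
  obtain ⟨lam, hlam0, hc₁, hlamr⟩ := hcol
  have hlamρ : lam ≠ ρ := fun h => by simp [h] at hlamr; exact hr.ne' hlamr.symm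
  set ε : ℝ := if lam < ρ then 1 else -1 with hε_def
  have hεr : ε * r₁ = ρ - lam := by
    rw [hε_def]
    rcases lt_or_gt_of_ne hlamρ with h | h
    · rw [if_pos h, ← hlamr, one_mul, abs_of_pos (by linarith)]
    · rw [if_neg (by linarith), ← hlamr, abs_of_neg (by linarith)]; ring
  have hε2 : ε^2 = 1 := by rw [hε_def]; split <;> norm_num
  set A : ℝ → ℝ := fun φ => lam * Real.cos φ + ε * Real.sqrt (r₁^2 - lam^2 * (Real.sin φ)^2)
    with hA_def
  have hAcont : Continuous A := by
    apply Continuous.add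
    · exact continuous_const.mul Real.continuous_cos
    · exact continuous_const.mul (Real.continuous_sqrt.comp (by continuity))
  have hA0 : A 0 = ρ := by
    rw [hA_def]
    simp only [Real.cos_zero, Real.sin_zero, mul_one]
    norm_num
    rw [Real.sqrt_sq hr.le]
    linarith [hεr]
  -- choose w
  have hev : ∀ᶠ φ in nhds (0:ℝ),
      (lam^2 * (Real.sin φ)^2 < r₁^2 ∧ |A φ - ρ| < m) ∧ (ρ < lam → ρ < lam * Real.cos φ) := by
    have h1 : ∀ᶠ φ in nhds (0:ℝ), lam^2 * (Real.sin φ)^2 < r₁^2 := by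
      have hc : ContinuousAt (fun φ => lam^2 * (Real.sin φ)^2) 0 := by fun_prop
      have hv : (fun φ => lam^2 * (Real.sin φ)^2) 0 < (fun _ : ℝ => r₁^2) 0 := by
        norm_num
        positivity
      exact hc.eventually_lt continuousAt_const hv
    have h2 : ∀ᶠ φ in nhds (0:ℝ), |A φ - ρ| < m := by
      have hc : ContinuousAt (fun φ => |A φ - ρ|) 0 := by
        exact (continuous_abs.comp (hAcont.sub continuous_const)).continuousAt
      have hv : (fun φ => |A φ - ρ|) 0 < (fun _ : ℝ => m) 0 := by
        simp only [hA0, sub_self, abs_zero]; exact hm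
      exact hc.eventually_lt continuousAt_const hv
    have h3 : ∀ᶠ φ in nhds (0:ℝ), (ρ < lam → ρ < lam * Real.cos φ) := by
      by_cases hl : ρ < lam
      · have hc : ContinuousAt (fun φ => lam * Real.cos φ) 0 := by fun_prop
        have hv : (fun _ : ℝ => ρ) 0 < (fun φ => lam * Real.cos φ) 0 := by
          simp only [Real.cos_zero, mul_one]; exact hl
        have := (continuousAt_const (y := ρ)).eventually_lt hc hv
        filter_upwards [this] with φ h using fun _ => h
      · exact Filter.Eventually.of_forall (fun φ h => absurd h hl)
    exact (h1.and h2).and h3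
  obtain ⟨w, hw0, hw1, hwP⟩ := interval_of_eventually hev
  set σ : ℝ := if 0 < lam ∧ lam < ρ then -1 else 1 with hσ_def
  refine ⟨w, σ, A, hw0, hw1, ?_, hAcont.continuousOn, hA0, ?_, ?_, ?_⟩
  · rw [hσ_def]; split
    · right; rfl
    · left; rfl
  · -- membership
    intro φ hφ
    obtain ⟨⟨hD, _⟩, _⟩ := hwP φ hφ
    have hD' : 0 ≤ r₁^2 - lam^2 * (Real.sin φ)^2 := by linarith
    have hsq : (A φ - lam * Real.cos φ)^2 = r₁^2 - lam^2 * (Real.sin φ)^2 := by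
      rw [hA_def]
      simp only
      rw [add_sub_cancel_left, mul_pow, hε2, one_mul, Real.sq_sqrt hD']
    have hexp : Complex.exp (((θ₀ : ℂ) + (φ : ℂ)) * Complex.I)
        = Complex.exp ((θ₀ : ℂ) * Complex.I) * Complex.exp ((φ : ℂ) * Complex.I) := by
      rw [← Complex.exp_add]
      ring_nf
    have hdec : Complex.exp ((φ : ℂ) * Complex.I)
        = ((Real.cos φ : ℝ) : ℂ) + ((Real.sin φ : ℝ) : ℂ) * Complex.I := by
      rw [Complex.exp_mul_I, ← Complex.ofReal_cos, ← Complex.ofReal_sin]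
    have hz : c + (A φ : ℂ) * Complex.exp (((θ₀ : ℂ) + (φ : ℂ)) * Complex.I) - c₁
        = Complex.exp ((θ₀ : ℂ) * Complex.I) *
          (((A φ * Real.cos φ - lam : ℝ) : ℂ) + ((A φ * Real.sin φ : ℝ) : ℂ) * Complex.I) := by
      rw [hexp, hdec, hc₁]
      push_cast
      ring
    rw [Metric.mem_sphere, Complex.dist_eq, hz, norm_mul, Complex.norm_exp_ofReal_mul_I,
      one_mul, Complex.norm_add_mul_I]
    have hval : (A φ * Real.cos φ - lam)^2 + (A φ * Real.sin φ)^2 = r₁^2 := by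
      linear_combination hsq + ((A φ)^2 - lam^2) * (Real.sin_sq_add_cos_sq φ)
    rw [hval, Real.sqrt_sq hr.le]
  · intro φ hφ
    exact (hwP φ hφ).1.2
  · -- sign
    intro φ hφ0 hφw
    obtain ⟨⟨hD, _⟩, h3⟩ := hwP φ hφw
    have hφ1 : |φ| ≤ 1 := hφw.trans hw1
    have hcos1 : Real.cos φ < 1 := cos_lt_one' hφ0 hφ1
    have hcospos : 0 < Real.cos φ := cos_pos' hφ1
    have hD' : 0 ≤ r₁^2 - lam^2 * (Real.sin φ)^2 := le_of_lt (by linarith)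
    have hr₁sq : r₁^2 = (ρ - lam)^2 := by rw [← hlamr, _root_.sq_abs]
    rcases lt_or_gt_of_ne hlamρ with hlt | hgt
    · -- lam < ρ, ε = 1
      have hεval : ε = 1 := if_pos hlt
      have hApos : A φ = lam * Real.cos φ + Real.sqrt (r₁^2 - lam^2 * (Real.sin φ)^2) := by
        rw [hA_def]; simp only [hεval, one_mul]
      have hpos : 0 < ρ - lam * Real.cos φ := by
        rcases le_or_gt 0 lam with h | h
        · nlinarith
        · nlinarith
      rcases lt_trichotomy lam 0 with hneg | hzero | hposl
      · -- lam < 0 : σ = 1, show A φ > ρ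
        have hσval : σ = 1 := by rw [hσ_def, if_neg]; rintro ⟨h, _⟩; linarith
        have key : 0 < ρ * (-lam) * (1 - Real.cos φ) :=
          mul_pos (mul_pos hρ (by linarith)) (by linarith)
        have hlt2 : (ρ - lam * Real.cos φ)^2 < r₁^2 - lam^2 * (Real.sin φ)^2 := by
          nlinarith [Real.sin_sq_add_cos_sq φ]
        have hs : ρ - lam * Real.cos φ < Real.sqrt (r₁^2 - lam^2 * (Real.sin φ)^2) :=
          (Real.lt_sqrt hpos.le).2 hlt2
        rw [hσval, hApos]
        linarith
      · exact absurd hzero hlam0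
      · -- 0 < lam < ρ : σ = -1, show A φ < ρ
        have hσval : σ = -1 := by rw [hσ_def, if_pos ⟨hposl, hlt⟩]
        have key : 0 < ρ * lam * (1 - Real.cos φ) :=
          mul_pos (mul_pos hρ hposl) (by linarith)
        have hlt2 : r₁^2 - lam^2 * (Real.sin φ)^2 < (ρ - lam * Real.cos φ)^2 := by
          nlinarith [Real.sin_sq_add_cos_sq φ]
        have hs : Real.sqrt (r₁^2 - lam^2 * (Real.sin φ)^2) < ρ - lam * Real.cos φ := by
          rw [show ρ - lam * Real.cos φ = Real.sqrt ((ρ - lam * Real.cos φ)^2) from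
            (Real.sqrt_sq hpos.le).symm]
          exact Real.sqrt_lt_sqrt hD' hlt2
        rw [hσval, hApos]
        linarith
    · -- ρ < lam, ε = -1, σ = 1
      have hεval : ε = -1 := by rw [hε_def, if_neg (by linarith)]
      have hσval : σ = 1 := by rw [hσ_def, if_neg]; rintro ⟨_, h⟩; linarith
      have hApos : A φ = lam * Real.cos φ - Real.sqrt (r₁^2 - lam^2 * (Real.sin φ)^2) := by
        rw [hA_def]; simp only [hεval]; ring
      have hpos : 0 < lam * Real.cos φ - ρ := by linarith [h3 hgt]
      have key : 0 < ρ * lam * (1 - Real.cos φ) :=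
        mul_pos (mul_pos hρ (by linarith)) (by linarith)
      have hlt2 : r₁^2 - lam^2 * (Real.sin φ)^2 < (lam * Real.cos φ - ρ)^2 := by
        nlinarith [Real.sin_sq_add_cos_sq φ]
      have hs : Real.sqrt (r₁^2 - lam^2 * (Real.sin φ)^2) < lam * Real.cos φ - ρ := by
        rw [show lam * Real.cos φ - ρ = Real.sqrt ((lam * Real.cos φ - ρ)^2) from
          (Real.sqrt_sq hpos.le).symm]
        exact Real.sqrt_lt_sqrt hD' hlt2
      rw [hσval, hApos]
      linarith

lemma normSq_sub_smul (z v : ℂ) (s : ℝ) :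
    Complex.normSq (z - (s:ℂ) * v)
      = Complex.normSq z - 2*s*((starRingEnd ℂ) v * z).re + s^2 * Complex.normSq v := by
  simp [Complex.normSq_apply, Complex.mul_re, Complex.mul_im, Complex.sub_re, Complex.sub_im,
    Complex.conj_re, Complex.conj_im, Complex.ofReal_re, Complex.ofReal_im]
  ring

lemma local_graph_line (c p v : ℂ) (ρ m : ℝ) (hρ : 0 < ρ) (hm : 0 < m) (hv : v ≠ 0) (θ₀ : ℝ)
    (hCx : {z : ℂ | ∃ t : ℝ, z = p + t • v} ∩ Metric.sphere c ρ
      = {c + ρ * Complex.exp (θ₀ * Complex.I)}) :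
    ∃ (w σ : ℝ) (A : ℝ → ℝ), 0 < w ∧ w ≤ 1 ∧ (σ = 1 ∨ σ = -1) ∧
      ContinuousOn A (Set.Icc (-1 : ℝ) 1) ∧ A 0 = ρ ∧
      (∀ φ : ℝ, |φ| ≤ w → c + (A φ : ℂ) * Complex.exp ((θ₀ + φ) * Complex.I)
        ∈ {z : ℂ | ∃ t : ℝ, z = p + t • v}) ∧
      (∀ φ : ℝ, |φ| ≤ w → |A φ - ρ| < m) ∧
      (∀ φ : ℝ, φ ≠ 0 → |φ| ≤ w → 0 < σ * (A φ - ρ)) := by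
  have hu : ‖Complex.exp (θ₀ * Complex.I)‖ = 1 :=
    Complex.norm_exp_ofReal_mul_I θ₀
  set u : ℂ := Complex.exp (θ₀ * Complex.I) with hu_def
  set x : ℂ := c + ρ * u with hx_def
  have hx : x ∈ {z : ℂ | ∃ t : ℝ, z = p + t • v} ∩ Metric.sphere c ρ := by
    rw [hCx]; exact rfl
  obtain ⟨t₀, ht₀⟩ := hx.1
  have hxc : Complex.normSq (x - c) = ρ^2 := by
    have h : x - c = (ρ : ℂ) * u := by rw [hx_def]; ring
    rw [h, Complex.normSq_mul, ← Complex.sq_norm u, hu]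
    simp [Complex.normSq_ofReal]
    ring
  set n : ℝ := Complex.normSq v with hn_def
  have hn : 0 < n := Complex.normSq_pos.2 hv
  set k : ℝ := ((starRingEnd ℂ) v * (x - c)).re with hk_def
  -- reflection: k = 0
  have hk : k = 0 := by
    by_contra hk0
    set s : ℝ := 2 * k / n with hs_def
    have hx' : p + ((t₀ - s) : ℝ) • v ∈ {z : ℂ | ∃ t : ℝ, z = p + t • v} ∩ Metric.sphere c ρ := by
      constructor
      · exact ⟨t₀ - s, rfl⟩
      · have he : p + ((t₀ - s) : ℝ) • v - c = (x - c) - (s : ℂ) * v := by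
          rw [ht₀]
          push_cast [Complex.real_smul]
          ring
        rw [Metric.mem_sphere, Complex.dist_eq, he, Complex.norm_def, normSq_sub_smul, hxc]
        rw [show ρ^2 - 2*s*((starRingEnd ℂ) v * (x-c)).re + s^2 * Complex.normSq v
          = ρ^2 - 2*s*k + s^2*n by rw [← hk_def, ← hn_def]]
        rw [show ρ^2 - 2*s*k + s^2*n = ρ^2 by rw [hs_def]; field_simp; ring]
        exact Real.sqrt_sq hρ.le
    rw [hCx] at hx'
    have : p + ((t₀ - s) : ℝ) • v = x := hx'
    rw [ht₀] at this
    have hsv : (s : ℂ) * v = 0 := by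
      have h4 := this
      rw [Complex.real_smul, Complex.real_smul] at h4
      have h3 : ((t₀ - s : ℝ) : ℂ) * v = (t₀ : ℂ) * v := add_left_cancel h4
      push_cast at h3
      linear_combination -h3
    have hs0 : s ≠ 0 := by
      rw [hs_def]
      intro h
      rcases div_eq_zero_iff.1 h with h' | h'
      · exact hk0 (by linarith)
      · exact hn.ne' h'
    rcases mul_eq_zero.1 hsv with h | h
    · exact hs0 (by exact_mod_cast h)
    · exact hv h
  -- direction of v
  obtain ⟨s', hs'0, hvu⟩ : ∃ s' : ℝ, s' ≠ 0 ∧ v = (s' : ℂ) * (Complex.I * u) := by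
    set β : ℂ := (starRingEnd ℂ) v * u with hβ_def
    have hβre : β.re = 0 := by
      have h1 : (starRingEnd ℂ) v * (x - c) = (ρ:ℂ) * β := by
        rw [hβ_def, hx_def]; ring
      have hkk := hk
      rw [hk_def, h1] at hkk
      have hρne : ρ ≠ 0 := hρ.ne'
      have h2 : ρ * β.re = 0 := by
        simpa [Complex.mul_re] using hkk
      exact (mul_eq_zero.1 h2).resolve_left hρne
    have huu : u * (starRingEnd ℂ) u = 1 := by
      rw [Complex.mul_conj]
      norm_cast
      rw [← Complex.sq_norm, hu]
      norm_num
    refine ⟨-β.im, fun h => ?_, ?_⟩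
    · have hβ0 : β = 0 := by
        apply Complex.ext
        · simpa using hβre
        · simpa using congrArg Neg.neg h
      apply hv
      have : (starRingEnd ℂ) v = β * (starRingEnd ℂ) u := by
        rw [hβ_def]
        calc (starRingEnd ℂ) v = (starRingEnd ℂ) v * (u * (starRingEnd ℂ) u) := by
              rw [huu]; ring
          _ = (starRingEnd ℂ) v * u * (starRingEnd ℂ) u := by ring
      rw [hβ0, zero_mul] at this
      have := congrArg (starRingEnd ℂ) this
      simpa using this
    · have hβval : β = (β.im : ℂ) * Complex.I := by
        apply Complex.ext <;> simp [hβre]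
      have hconj : (starRingEnd ℂ) v = β * (starRingEnd ℂ) u := by
        calc (starRingEnd ℂ) v = (starRingEnd ℂ) v * (u * (starRingEnd ℂ) u) := by
              rw [huu]; ring
          _ = β * (starRingEnd ℂ) u := by rw [hβ_def]; ring
      have h6 := congrArg (starRingEnd ℂ) hconj
      rw [map_mul, Complex.conj_conj, Complex.conj_conj, hβval, map_mul,
        Complex.conj_ofReal, Complex.conj_I] at h6
      rw [h6]
      push_cast
      ring
  -- the graph function
  set A : ℝ → ℝ := fun φ => ρ / Real.cos φ with hA_def
  have hA0 : A 0 = ρ := by rw [hA_def]; simp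
  have hAcont : ContinuousOn A (Set.Icc (-1 : ℝ) 1) := by
    apply ContinuousOn.div continuousOn_const Real.continuous_cos.continuousOn
    intro y hy
    exact (cos_pos' (abs_le.2 ⟨hy.1, hy.2⟩)).ne'
  have hev : ∀ᶠ φ in nhds (0:ℝ), |A φ - ρ| < m := by
    have hc : ContinuousAt (fun φ => |A φ - ρ|) 0 := by
      apply ContinuousAt.abs
      apply ContinuousAt.sub _ continuousAt_const
      rw [hA_def]
      exact ContinuousAt.div continuousAt_const Real.continuous_cos.continuousAt (by simp)
    have hv0 : (fun φ => |A φ - ρ|) 0 < (fun _ : ℝ => m) 0 := by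
      simp only [hA0, sub_self, abs_zero]; exact hm
    exact hc.eventually_lt continuousAt_const hv0
  obtain ⟨w, hw0, hw1, hwP⟩ := interval_of_eventually hev
  refine ⟨w, 1, A, hw0, hw1, Or.inl rfl, hAcont, hA0, ?_, hwP, ?_⟩
  · -- membership
    intro φ hφ
    have hφ1 : |φ| ≤ 1 := hφ.trans hw1
    have hcos : 0 < Real.cos φ := cos_pos' hφ1
    refine ⟨t₀ + ρ * (Real.sin φ / (Real.cos φ * s')), ?_⟩
    have hdec : Complex.exp ((φ : ℂ) * Complex.I)
        = ((Real.cos φ : ℝ) : ℂ) + ((Real.sin φ : ℝ) : ℂ) * Complex.I := by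
      rw [Complex.exp_mul_I, ← Complex.ofReal_cos, ← Complex.ofReal_sin]
    have hexp : Complex.exp (((θ₀ : ℂ) + (φ : ℂ)) * Complex.I)
        = u * Complex.exp ((φ : ℂ) * Complex.I) := by
      rw [hu_def, ← Complex.exp_add]; ring_nf
    have hp : p = c + (ρ:ℂ) * u - (t₀:ℂ) * v := by
      have h7 := ht₀
      rw [Complex.real_smul, hx_def] at h7
      linear_combination -h7
    rw [Complex.real_smul, hp, hexp, hdec, hvu, hA_def]
    simp only
    push_cast
    have hcosne : (Complex.cos (φ:ℂ)) ≠ 0 := by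
      rw [← Complex.ofReal_cos]
      exact_mod_cast hcos.ne'
    have hs'ne : (s' : ℂ) ≠ 0 := by exact_mod_cast hs'0
    field_simp
    ring
  · -- sign
    intro φ hφ0 hφw
    have hφ1 : |φ| ≤ 1 := hφw.trans hw1
    have hcos : 0 < Real.cos φ := cos_pos' hφ1
    have hcos1 : Real.cos φ < 1 := cos_lt_one' hφ0 hφ1
    rw [one_mul, sub_pos, hA_def]
    rw [lt_div_iff₀ hcos]
    nlinarith

lemma crossing (ρ s θ₁ θ₂ w₁ w₂ : ℝ) (h12 : θ₁ < θ₂) (hs : s = 1 ∨ s = -1)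
    (hw₁ : θ₂ - θ₁ < w₁) (hw₂ : θ₂ - θ₁ < w₂) (hw₁1 : w₁ ≤ 1) (hw₂1 : w₂ ≤ 1)
    (A₁ A₂ : ℝ → ℝ)
    (hc₁ : ContinuousOn A₁ (Set.Icc (-1 : ℝ) 1)) (hc₂ : ContinuousOn A₂ (Set.Icc (-1 : ℝ) 1))
    (hA₁0 : A₁ 0 = ρ) (hA₂0 : A₂ 0 = ρ)
    (hs₁ : ∀ φ : ℝ, φ ≠ 0 → |φ| ≤ w₁ → 0 < s * (A₁ φ - ρ))
    (hs₂ : ∀ φ : ℝ, φ ≠ 0 → |φ| ≤ w₂ → 0 < s * (A₂ φ - ρ)) :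
    ∃ t ∈ Set.Icc θ₁ θ₂, A₁ (t - θ₁) = A₂ (t - θ₂) := by
  set G : ℝ → ℝ := fun t => s * (A₁ (t - θ₁) - A₂ (t - θ₂)) with hG_def
  have hsub₁ : Set.MapsTo (fun t => t - θ₁) (Set.Icc θ₁ θ₂) (Set.Icc (-1 : ℝ) 1) := by
    intro t ht
    simp only [Set.mem_Icc] at *
    constructor <;> linarith [ht.1, ht.2]
  have hsub₂ : Set.MapsTo (fun t => t - θ₂) (Set.Icc θ₁ θ₂) (Set.Icc (-1 : ℝ) 1) := by
    intro t ht
    simp only [Set.mem_Icc] at *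
    constructor <;> linarith [ht.1, ht.2]
  have hGcont : ContinuousOn G (Set.Icc θ₁ θ₂) := by
    apply ContinuousOn.mul continuousOn_const
    apply ContinuousOn.sub
    · exact hc₁.comp ((continuous_id.sub continuous_const).continuousOn) hsub₁
    · exact hc₂.comp ((continuous_id.sub continuous_const).continuousOn) hsub₂
  have hG₁ : G θ₁ < 0 := by
    have h := hs₂ (θ₁ - θ₂) (by intro h; rw [sub_eq_zero] at h; exact h12.ne h)
      (by rw [abs_of_neg (by linarith)]; linarith)
    have he : G θ₁ = -(s * (A₂ (θ₁ - θ₂) - ρ)) := by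
      rw [hG_def]; simp only []; rw [sub_self, hA₁0]; ring
    rw [he]; linarith
  have hG₂ : 0 < G θ₂ := by
    have h := hs₁ (θ₂ - θ₁) (by intro h; rw [sub_eq_zero] at h; exact h12.ne h.symm)
      (by rw [abs_of_pos (by linarith)]; linarith)
    have he : G θ₂ = s * (A₁ (θ₂ - θ₁) - ρ) := by
      rw [hG_def]; simp only []; rw [sub_self, hA₂0]
    rw [he]; exact h
  obtain ⟨t, ht, hGt⟩ := intermediate_value_Icc h12.le hGcont ⟨hG₁.le, hG₂.le⟩
  refine ⟨t, ht, ?_⟩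
  have hsne : s ≠ 0 := by rcases hs with h | h <;> rw [h] <;> norm_num
  have h0 : s * (A₁ (t - θ₁) - A₂ (t - θ₂)) = 0 := hGt
  rcases mul_eq_zero.1 h0 with h | h
  · exact absurd h hsne
  · linarith [sub_eq_zero.1 h]

lemma im_pos_aux (c : ℂ) (ρ m a ψ : ℝ) (hρ : 0 < ρ) (hmδ : m ≤ c.im - ρ) (hmρ : m ≤ ρ)
    (hb : |a - ρ| < m) : 0 < (c + (a:ℂ) * Complex.exp ((ψ:ℂ) * Complex.I)).im := by
  rw [Complex.exp_mul_I, ← Complex.ofReal_cos, ← Complex.ofReal_sin]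
  have hsin := Real.neg_one_le_sin ψ
  have hsin' := Real.sin_le_one ψ
  have hab := abs_lt.1 hb
  simp only [Complex.add_im, Complex.mul_im, Complex.ofReal_re, Complex.ofReal_im,
    Complex.add_re, Complex.mul_re, Complex.I_re, Complex.I_im]
  nlinarith [hab.1, hab.2]


/-- A generalized circle in `ℂ`: either a Euclidean circle of positive radius, or a
Euclidean line (a coset of a one-dimensional `ℝ`-subspace of `ℂ`). -/
def IsGenCircle (C : Set ℂ) : Prop :=
  (∃ (c : ℂ) (ρ : ℝ), 0 < ρ ∧ C = Metric.sphere c ρ) ∨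
  (∃ p v : ℂ, v ≠ 0 ∧ C = {z : ℂ | ∃ t : ℝ, z = p + t • v})

/-- A constant curvature curve of `ℍ`: the trace on `ℍ` of a generalized circle in `ℂ` that
meets the upper half-plane. -/
def IsCCC (γ : Set UpperHalfPlane) : Prop :=
  ∃ C : Set ℂ, IsGenCircle C ∧ (∃ z : UpperHalfPlane, (z : ℂ) ∈ C) ∧
    γ = {z : UpperHalfPlane | (z : ℂ) ∈ C}

/-- A hyperbolic circle of `ℍ`: the trace on `ℍ` of a Euclidean circle entirely contained
in the open upper half-plane. -/
def IsHypCircle (γ : Set UpperHalfPlane) : Prop :=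
  ∃ (c : ℂ) (ρ : ℝ), 0 < ρ ∧ (∀ z ∈ Metric.sphere c ρ, 0 < z.im) ∧
    γ = {z : UpperHalfPlane | (z : ℂ) ∈ Metric.sphere c ρ}

/-- Given a hyperbolic circle `S` and, for each `x ∈ S`, a constant curvature curve `γ_x`
meeting `S` exactly at `x`, some two of the curves `γ_x` must intersect. -/
theorem hyperbolic_circle_tangent_curves_intersect
    (S : Set UpperHalfPlane) (hS : IsHypCircle S)
    (γ : UpperHalfPlane → Set UpperHalfPlane)
    (hγ : ∀ x ∈ S, IsCCC (γ x) ∧ γ x ∩ S = {x}) :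
    ∃ x ∈ S, ∃ y ∈ S, x ≠ y ∧ (γ x ∩ γ y).Nonempty := by
  obtain ⟨c, ρ, hρ, hsph, hSeq⟩ := hS
  have hδ : 0 < c.im - ρ := by
    have hmem : (c - ρ * Complex.I) ∈ Metric.sphere c ρ := by
      rw [Metric.mem_sphere, Complex.dist_eq]
      rw [show c - ρ * Complex.I - c = -(ρ * Complex.I) by ring, norm_neg, norm_mul,
        Complex.norm_real, Real.norm_eq_abs, Complex.norm_I, mul_one, abs_of_pos hρ]
    have h := hsph _ hmem
    simpa using h
  set m := min (c.im - ρ) ρ with hm_def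
  have hm : 0 < m := lt_min hδ hρ
  set X : ℝ → ℂ := fun θ => c + ρ * Complex.exp (θ * Complex.I) with hX_def
  have hXsph : ∀ θ, X θ ∈ Metric.sphere c ρ := by
    intro θ
    rw [hX_def]
    simp only
    rw [Metric.mem_sphere, Complex.dist_eq,
      show c + ↑ρ * Complex.exp (θ * Complex.I) - c = ↑ρ * Complex.exp (θ * Complex.I) by ring,
      norm_mul, Complex.norm_real, Real.norm_eq_abs, Complex.norm_exp_ofReal_mul_I, mul_one, abs_of_pos hρ]
  have hXim : ∀ θ, 0 < (X θ).im := fun θ => hsph _ (hXsph θ)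
  set XH : ℝ → UpperHalfPlane := fun θ => ⟨X θ, hXim θ⟩ with hXH_def
  have hXHS : ∀ θ, XH θ ∈ S := by
    intro θ
    rw [hSeq]
    exact hXsph θ
  -- local graph data for each angle
  have key : ∀ θ : ℝ, ∃ (w σ : ℝ) (A : ℝ → ℝ), 0 < w ∧ w ≤ 1 ∧ (σ = 1 ∨ σ = -1) ∧
      ContinuousOn A (Set.Icc (-1:ℝ) 1) ∧ A 0 = ρ ∧
      (∀ φ : ℝ, φ ≠ 0 → |φ| ≤ w → 0 < σ * (A φ - ρ)) ∧
      (∀ φ : ℝ, |φ| ≤ w → ∃ z : UpperHalfPlane,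
        (z : ℂ) = c + (A φ : ℂ) * Complex.exp (((θ:ℂ) + (φ:ℂ)) * Complex.I) ∧ z ∈ γ (XH θ)) := by
    intro θ
    obtain ⟨⟨C, hCgen, -, hγeq⟩, hγcap⟩ := hγ (XH θ) (hXHS θ)
    have hCsph : C ∩ Metric.sphere c ρ = {c + ρ * Complex.exp (θ * Complex.I)} := by
      apply Set.eq_singleton_iff_unique_mem.2
      constructor
      · have hx : XH θ ∈ γ (XH θ) ∩ S := by rw [hγcap]; rfl
        have h1 : (XH θ : ℂ) ∈ C := by
          have h2 := hx.1
          rw [hγeq] at h2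
          exact h2
        exact ⟨h1, hXsph θ⟩
      · intro z hz
        have hzim : 0 < z.im := hsph z hz.2
        have hzH : (⟨z, hzim⟩ : UpperHalfPlane) ∈ γ (XH θ) ∩ S := by
          constructor
          · rw [hγeq]; exact hz.1
          · rw [hSeq]; exact hz.2
        rw [hγcap] at hzH
        exact congrArg (fun q : UpperHalfPlane => (q : ℂ)) hzH
    have hmle₁ : m ≤ c.im - ρ := min_le_left _ _
    have hmle₂ : m ≤ ρ := min_le_right _ _
    rcases hCgen with ⟨c₁, r₁, hr₁, hCeq⟩ | ⟨p, v, hv, hCeq⟩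
    · rw [hCeq] at hCsph hγeq
      obtain ⟨w, σ, A, hw0, hw1, hσ, hcont, hA0, hmem, hbound, hsign⟩ :=
        local_graph_circle c c₁ ρ r₁ m hρ hr₁ hm θ hCsph
          (circle_tangent_collinear c c₁ ρ r₁ hρ θ hCsph)
      refine ⟨w, σ, A, hw0, hw1, hσ, hcont, hA0, hsign, ?_⟩
      intro φ hφ
      have hpt := hmem φ hφ
      have him := im_pos_aux c ρ m (A φ) (θ + φ) hρ hmle₁ hmle₂ (hbound φ hφ)
      rw [show (((θ + φ : ℝ)):ℂ) * Complex.I = ((θ:ℂ) + (φ:ℂ)) * Complex.I by push_cast; ring]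
        at him
      refine ⟨⟨_, him⟩, rfl, ?_⟩
      rw [hγeq]
      exact hpt
    · rw [hCeq] at hCsph hγeq
      obtain ⟨w, σ, A, hw0, hw1, hσ, hcont, hA0, hmem, hbound, hsign⟩ :=
        local_graph_line c p v ρ m hρ hm hv θ hCsph
      refine ⟨w, σ, A, hw0, hw1, hσ, hcont, hA0, hsign, ?_⟩
      intro φ hφ
      have hpt := hmem φ hφ
      have him := im_pos_aux c ρ m (A φ) (θ + φ) hρ hmle₁ hmle₂ (hbound φ hφ)
      rw [show (((θ + φ : ℝ)):ℂ) * Complex.I = ((θ:ℂ) + (φ:ℂ)) * Complex.I by push_cast; ring]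
        at him
      refine ⟨⟨_, him⟩, rfl, ?_⟩
      rw [hγeq]
      exact hpt
  choose w σ A hw0 hw1 hσor hcont hA0 hsign hmem using key
  -- pigeonhole
  have hIco : ¬ (Set.Ico (0:ℝ) (2*π)).Countable := by
    intro h
    have h2 := Set.Countable.measure_zero h MeasureTheory.volume
    rw [Real.volume_Ico, ENNReal.ofReal_eq_zero] at h2
    nlinarith [Real.pi_pos]
  set T : ℕ → Bool → Set ℝ := fun n b =>
    {θ | θ ∈ Set.Ico (0:ℝ) (2*π) ∧ 1/(n+1) < w θ ∧ σ θ = (if b then 1 else -1)} with hT_def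
  have hcover : Set.Ico (0:ℝ) (2*π) ⊆ ⋃ (n : ℕ), ⋃ (b : Bool), T n b := by
    intro θ hθ
    obtain ⟨n, hn⟩ := exists_nat_gt (1 / w θ)
    have hw' : 1/((n:ℝ)+1) < w θ := by
      rw [div_lt_iff₀ (by positivity)]
      rw [div_lt_iff₀ (hw0 θ)] at hn
      nlinarith [hw0 θ]
    rcases hσor θ with h | h
    · exact Set.mem_iUnion.2 ⟨n, Set.mem_iUnion.2 ⟨true, ⟨hθ, hw', by simp [h]⟩⟩⟩
    · exact Set.mem_iUnion.2 ⟨n, Set.mem_iUnion.2 ⟨false, ⟨hθ, hw', by simp [h]⟩⟩⟩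
  have hinf : ∃ n b, (T n b).Infinite := by
    by_contra hfin
    push_neg at hfin
    apply hIco
    apply Set.Countable.mono hcover
    apply Set.countable_iUnion
    intro n
    apply Set.countable_iUnion
    intro b
    exact (hfin n b).countable
  obtain ⟨n, b, hTinf⟩ := hinf
  have hmap : Set.MapsTo (fun θ : ℝ => ⌊θ * ((n:ℝ)+1)⌋) (T n b)
      (Set.Icc (0:ℤ) ⌈2*π*((n:ℝ)+1)⌉) := by
    intro θ hθ
    obtain ⟨⟨h0, h2π⟩, -, -⟩ := hθ
    constructor
    · exact Int.floor_nonneg.2 (by positivity)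
    · have h3 : θ*((n:ℝ)+1) ≤ 2*π*((n:ℝ)+1) := by nlinarith
      exact le_trans (Int.floor_le_ceil _) (Int.ceil_le_ceil h3)
  obtain ⟨θa, hθa, θb, hθb, hab, heqf⟩ :=
    hTinf.exists_ne_map_eq_of_mapsTo hmap (Set.finite_Icc _ _)
  have hclose : |θa - θb| < 1/((n:ℝ)+1) := by
    have h1 := Int.abs_sub_lt_one_of_floor_eq_floor heqf
    rw [show θa*((n:ℝ)+1) - θb*((n:ℝ)+1) = (θa - θb)*((n:ℝ)+1) by ring, abs_mul,
      abs_of_pos (by positivity : (0:ℝ) < (n:ℝ)+1)] at h1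
    rw [lt_div_iff₀ (by positivity : (0:ℝ) < (n:ℝ)+1)]
    exact h1
  obtain ⟨θ₁, θ₂, h12, hT₁, hT₂, hclose'⟩ :
      ∃ θ₁ θ₂ : ℝ, θ₁ < θ₂ ∧ θ₁ ∈ T n b ∧ θ₂ ∈ T n b ∧ θ₂ - θ₁ < 1/((n:ℝ)+1) := by
    rcases hab.lt_or_gt with h | h
    · exact ⟨θa, θb, h, hθa, hθb, by rw [abs_sub_comm] at hclose; linarith [abs_lt.1 hclose]⟩
    · exact ⟨θb, θa, h, hθb, hθa, by linarith [abs_lt.1 hclose]⟩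
  obtain ⟨hIco₁, hwT₁, hσ₁⟩ := hT₁
  obtain ⟨hIco₂, hwT₂, hσ₂⟩ := hT₂
  have hσeq : σ θ₂ = σ θ₁ := by rw [hσ₁, hσ₂]
  -- apply crossing
  obtain ⟨t, ht, hAt⟩ := crossing ρ (σ θ₁) θ₁ θ₂ (w θ₁) (w θ₂) h12 (hσor θ₁)
    (by linarith) (by linarith) (hw1 θ₁) (hw1 θ₂) (A θ₁) (A θ₂) (hcont θ₁) (hcont θ₂)
    (hA0 θ₁) (hA0 θ₂) (hsign θ₁) (by rw [← hσeq] at *; exact hsign θ₂)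
  -- build the common point
  have hφ₁ : |t - θ₁| ≤ w θ₁ := by
    rw [_root_.abs_of_nonneg (by linarith [ht.1] : (0:ℝ) ≤ t - θ₁)]
    linarith [ht.2, hwT₁]
  have hφ₂ : |t - θ₂| ≤ w θ₂ := by
    rw [_root_.abs_of_nonpos (by linarith [ht.2] : t - θ₂ ≤ (0:ℝ))]
    linarith [ht.1, hwT₂]
  obtain ⟨z₁, hz₁coe, hz₁mem⟩ := hmem θ₁ (t - θ₁) hφ₁
  obtain ⟨z₂, hz₂coe, hz₂mem⟩ := hmem θ₂ (t - θ₂) hφ₂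
  have hzeq : z₁ = z₂ := by
    apply UpperHalfPlane.ext
    rw [hz₁coe, hz₂coe, hAt]
    rw [show ((θ₁:ℂ) + ((t - θ₁ : ℝ):ℂ)) * Complex.I = ((θ₂:ℂ) + ((t - θ₂ : ℝ):ℂ)) * Complex.I
      by push_cast; ring]
  -- distinctness
  have hne : XH θ₁ ≠ XH θ₂ := by
    intro h
    have hcoe : X θ₁ = X θ₂ := by
      have h2 := congrArg (fun q : UpperHalfPlane => (q : ℂ)) h
      simpa [hXH_def] using h2
    rw [hX_def] at hcoe
    simp only at hcoe
    have hexp : Complex.exp ((θ₁:ℂ) * Complex.I) = Complex.exp ((θ₂:ℂ) * Complex.I) := by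
      have hρc : (ρ:ℂ) ≠ 0 := by exact_mod_cast hρ.ne'
      exact mul_left_cancel₀ hρc (add_left_cancel hcoe)
    rw [Complex.exp_eq_exp_iff_exists_int] at hexp
    obtain ⟨k, hk⟩ := hexp
    have him : θ₁ = θ₂ + k * (2*π) := by
      have := congrArg Complex.im hk
      simpa using this
    have hk0 : k = 0 := by
      obtain ⟨ha1, ha2⟩ := hIco₁
      obtain ⟨hb1, hb2⟩ := hIco₂
      have hπ := Real.pi_pos
      have : |(k:ℝ)| * (2*π) < 2*π := by
        rw [show |(k:ℝ)| * (2*π) = |(k:ℝ) * (2*π)| by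
          rw [abs_mul, _root_.abs_of_pos Real.two_pi_pos]]
        rw [show (k:ℝ) * (2*π) = θ₁ - θ₂ by linarith]
        rw [abs_lt]
        constructor <;> linarith
      have habs : |(k:ℝ)| < 1 := by nlinarith
      have : (k:ℝ) = 0 := by
        by_contra hne0
        have : (1:ℝ) ≤ |(k:ℝ)| := by
          have : k ≠ 0 := fun h => hne0 (by exact_mod_cast congrArg (Int.cast : ℤ → ℝ) h)
          exact_mod_cast Int.one_le_abs this
        linarith
      exact_mod_cast this
    rw [hk0] at him
    simp at him
    exact h12.ne him
  exact ⟨XH θ₁, hXHS θ₁, XH θ₂, hXHS θ₂, hne, z₁, hz₁mem, hzeq ▸ hz₂mem⟩
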